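/- Let F : ℂ → ℂ be entire with F real-valued on the real axis, let f be its restriction to ℝ with Taylor coefficients c_k = F^{(k)}(0)/k!, let m ≥ 1 be an integer and a > 0. Then the finite part integral ⨍_0^a f(x)/x^m dx, defined as the limit as ε → 0⁺ of [∫_ε^a f(x) x^{-m} dx − (Σ_{k=0}^{m-2} c_k/((m-k-1) ε^{m-k-1}) − c_{m-1} ln ε)], equals the contour integral (1/(2π a^{m-1})) ∫_0^{2π} F(a e^{iθ}) (ln a + i(θ − π)) e^{i(1-m)θ} dθ; in particular this integral is real. -/

import Mathlib

open Filter MeasureTheory Set Complex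

lemma my_integral_tsum {E : Type*} [NormedAddCommGroup E] [NormedSpace ℝ E]
    (h : ℕ → ℝ → E) (a b : ℝ) (hab : a ≤ b) (hcont : ∀ n, Continuous (h n))
    (B : ℕ → ℝ) (hB : Summable B) (hBnn : ∀ n, 0 ≤ B n)
    (hbound : ∀ n, ∀ x ∈ Set.Ioc a b, ‖h n x‖ ≤ B n) :
    (∫ x in a..b, (∑' n, h n x)) = ∑' n, ∫ x in a..b, h n x := by
  rw [intervalIntegral.integral_of_le hab]
  have := MeasureTheory.integral_tsum (μ := volume.restrict (Set.Ioc a b))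
      (f := h) (fun n => (hcont n).aestronglyMeasurable.restrict) ?_
  · rw [this]
    exact tsum_congr fun n => (intervalIntegral.integral_of_le hab).symm
  · have key : ∀ n, (∫⁻ x in Set.Ioc a b, ‖h n x‖₊ ∂volume)
        ≤ ENNReal.ofReal (B n) * ENNReal.ofReal (b - a) := by
      intro n
      calc ∫⁻ x in Set.Ioc a b, ‖h n x‖₊ ∂volume
          ≤ ∫⁻ _ in Set.Ioc a b, ENNReal.ofReal (B n) ∂volume := by
            refine setLIntegral_mono measurable_const fun x hx => ?_
            rw [← ENNReal.ofReal_coe_nnreal, coe_nnnorm]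
            exact ENNReal.ofReal_le_ofReal (hbound n x hx)
        _ = ENNReal.ofReal (B n) * ENNReal.ofReal (b - a) := by
            rw [setLIntegral_const, Real.volume_Ioc]
    refine ne_top_of_le_ne_top ?_ (ENNReal.tsum_le_tsum key)
    rw [ENNReal.tsum_mul_right]
    refine ENNReal.mul_ne_top ?_ ENNReal.ofReal_ne_top
    rw [← ENNReal.ofReal_tsum_of_nonneg hBnn hB]
    exact ENNReal.ofReal_ne_top

lemma my_exp_deriv (ν : ℂ) (θ : ℝ) :
    HasDerivAt (fun t : ℝ => Complex.exp (ν * t)) (ν * Complex.exp (ν * θ)) θ := by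
  have := ((Complex.hasDerivAt_exp (ν * θ)).comp θ
    (((hasDerivAt_id (θ:ℂ)).const_mul ν).comp_ofReal))
  simpa [mul_comm, Function.comp_def] using this

lemma my_circle_int (n : ℤ) (hn : n ≠ 0) :
    (∫ θ : ℝ in (0:ℝ)..(2*Real.pi), Complex.exp ((n : ℂ) * θ * Complex.I)) = 0 := by
  have h : ((n:ℂ) * Complex.I) ≠ 0 := by
    simp [Complex.I_ne_zero, Int.cast_injective.ne_iff, hn]
  have := integral_exp_mul_complex (a := 0) (b := 2*Real.pi) h
  simp_rw [show ∀ θ:ℝ, (n:ℂ) * θ * Complex.I = ((n:ℂ) * Complex.I) * θ by intro θ; ring] at *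
  rw [this]
  have : ((n:ℂ) * Complex.I) * (2*Real.pi : ℝ) = (n:ℤ) * (2 * Real.pi * Complex.I) := by
    push_cast; ring
  rw [this, Complex.exp_int_mul_two_pi_mul_I]
  simp

lemma my_circle_int2 (n : ℤ) (hn : n ≠ 0) :
    (∫ θ : ℝ in (0:ℝ)..(2*Real.pi), ((θ:ℂ) - Real.pi) * Complex.exp ((n : ℂ) * θ * Complex.I))
      = 2 * Real.pi / ((n:ℂ) * Complex.I) := by
  set ν : ℂ := (n:ℂ) * Complex.I with hν
  have hνne : ν ≠ 0 := by
    simp [hν, Complex.I_ne_zero, Int.cast_injective.ne_iff, hn]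
  have key : ∀ θ : ℝ, HasDerivAt
      (fun t : ℝ => ((t:ℂ) - Real.pi) * Complex.exp (ν * t) / ν - Complex.exp (ν * t) / ν^2)
      (((θ:ℂ) - Real.pi) * Complex.exp (ν * θ)) θ := by
    intro θ
    have h1 : HasDerivAt (fun t : ℝ => ((t:ℂ) - Real.pi)) 1 θ := by
      simpa using (Complex.ofRealCLM.hasDerivAt (x := θ)).sub_const (Real.pi : ℂ)
    have h2 := my_exp_deriv ν θ
    have h3 := ((h1.mul h2).div_const ν).sub (h2.div_const (ν^2))
    convert h3 using 1
    · rfl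
    · rfl
    field_simp
    ring
  have := intervalIntegral.integral_eq_sub_of_hasDerivAt (a := 0) (b := 2*Real.pi)
    (fun θ _ => key θ) ?_
  · simp_rw [show ∀ θ:ℝ, (n:ℂ) * θ * Complex.I = ν * θ by intro θ; rw [hν]; ring]
    rw [this]
    have e1 : ν * ((2:ℝ)*Real.pi : ℝ) = (n:ℤ) * (2 * Real.pi * Complex.I) := by
      rw [hν]; push_cast; ring
    have e2 : ν * ((0:ℝ):ℂ) = 0 := by simp
    rw [e1, Complex.exp_int_mul_two_pi_mul_I, e2, Complex.exp_zero]
    push_cast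
    field_simp
    ring
  · apply Continuous.intervalIntegrable
    exact (continuous_ofReal.sub continuous_const).mul
      ((continuous_const.mul continuous_ofReal).cexp)

lemma my_part1 (f : ℝ → ℝ) (c : ℕ → ℝ) (M : ℕ) (a : ℝ) (ha : 0 < a)
    (g : ℝ → ℝ) (hgcont : Continuous g)
    (hsumR : ∀ x : ℝ, HasSum (fun k => c k * x ^ k) (f x))
    (hgsum : ∀ x : ℝ, HasSum (fun j => c (M + 1 + j) * x ^ j) (g x)) :
    Tendsto
        (fun ε : ℝ =>
          (∫ x in ε..a, f x / x ^ (M+1)) -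
            ((∑ k ∈ Finset.range (M + 1 - 1),
                c k / (((M + 1 - k - 1 : ℕ) : ℝ) * ε ^ (M + 1 - k - 1))) -
              c (M + 1 - 1) * Real.log ε))
        (nhdsWithin 0 (Set.Ioi 0))
        (nhds (((∑ k ∈ Finset.range M, c k * a ^ ((k:ℤ) - M) / ((k:ℝ) - M))
          + c M * Real.log a) + ∫ x in (0:ℝ)..a, g x)) := by
  have hIg : ∀ b₁ b₂ : ℝ, IntervalIntegrable g volume b₁ b₂ :=
    fun _ _ => hgcont.intervalIntegrable _ _
  have hdecomp : ∀ x : ℝ, 0 < x → f x / x^(M+1) =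
      (∑ k ∈ Finset.range M, c k * x ^ ((k:ℤ) - (M+1))) + c M * x⁻¹ + g x := by
    intro x hx
    have hx0 : x ≠ 0 := ne_of_gt hx
    have hsplit : f x = (∑ k ∈ Finset.range (M+1), c k * x ^ k) + x^(M+1) * g x := by
      have h1 := (hsumR x).tsum_eq
      have h2 := Summable.sum_add_tsum_nat_add (f := fun k => c k * x ^ k) (M+1)
        (hsumR x).summable
      have h3 : HasSum (fun j => c (j + (M+1)) * x ^ (j + (M+1))) (x^(M+1) * g x) := by
        have H := (hgsum x).mul_left (x^(M+1))
        have e : (fun j => x^(M+1) * (c (M+1+j) * x^j))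
            = fun j => c (j+(M+1)) * x^(j+(M+1)) := by
          funext j; rw [add_comm j (M+1), pow_add]; ring
        rwa [e] at H
      rw [← h1, ← h3.tsum_eq]; exact h2.symm
    have hgpart : x ^ (M + 1) * g x / x ^ (M + 1) = g x := by
      rw [mul_comm, mul_div_assoc, div_self (pow_ne_zero _ hx0), mul_one]
    have hinvpart : c M * x ^ M / x ^ (M + 1) = c M * x⁻¹ := by
      have h4 : x^M / (x^M * x) = x⁻¹ := by
        rw [div_mul_eq_div_div, div_self (pow_ne_zero _ hx0), one_div]
      rw [pow_succ, mul_div_assoc, h4]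
    have hsumpart : (∑ k ∈ Finset.range M, c k * x ^ k) / x^(M+1)
        = ∑ k ∈ Finset.range M, c k * x ^ ((k:ℤ) - (M+1)) := by
      rw [Finset.sum_div]
      refine Finset.sum_congr rfl fun k _ => ?_
      rw [mul_div_assoc]
      congr 1
      rw [← zpow_natCast x k, ← zpow_natCast x (M+1), ← zpow_sub₀ hx0]
      push_cast
      try rfl
    rw [hsplit, Finset.sum_range_succ, add_div, add_div, hgpart, hinvpart, hsumpart]
  have hint : ∀ ε : ℝ, ε ∈ Set.Ioo 0 a →
      (∫ x in ε..a, f x / x^(M+1)) =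
        ((∑ k ∈ Finset.range M, c k * (a ^ ((k:ℤ) - M) - ε ^ ((k:ℤ) - M)) / ((k:ℝ) - M))
          + c M * (Real.log a - Real.log ε)) + ∫ x in ε..a, g x := by
    intro ε hε
    obtain ⟨hε0, hεa⟩ := hε
    have huIcc : Set.uIcc ε a ⊆ Set.Ioi (0:ℝ) := by
      rw [Set.uIcc_of_le hεa.le]
      exact fun x hx => lt_of_lt_of_le hε0 hx.1
    have h0uIcc : (0:ℝ) ∉ Set.uIcc ε a := fun h => lt_irrefl 0 (Set.mem_Ioi.mp (huIcc h))
    have hcongr : (∫ x in ε..a, f x / x^(M+1)) = ∫ x in ε..a,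
        ((∑ k ∈ Finset.range M, c k * x ^ ((k:ℤ) - (M+1))) + c M * x⁻¹ + g x) :=
      intervalIntegral.integral_congr (fun x hx => hdecomp x (huIcc hx))
    rw [hcongr]
    have hIzpow : ∀ (r : ℝ) (n : ℤ), IntervalIntegrable (fun x : ℝ => r * x ^ n) volume ε a := by
      intro r n
      have hcz : ContinuousOn (fun x : ℝ => x ^ n) (Set.uIcc ε a) := fun x hx =>
        (continuousAt_zpow₀ x n (Or.inl (ne_of_gt (huIcc hx)))).continuousWithinAt
      exact (continuousOn_const.mul hcz).intervalIntegrable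
    have hIsum : IntervalIntegrable
        (fun x : ℝ => ∑ k ∈ Finset.range M, c k * x ^ ((k:ℤ)-(M+1))) volume ε a := by
      have hcs : ContinuousOn (fun x : ℝ => ∑ k ∈ Finset.range M, c k * x ^ ((k:ℤ)-(M+1)))
          (Set.uIcc ε a) := by
        refine continuousOn_finset_sum _ fun k _ => continuousOn_const.mul fun x hx => ?_
        exact (continuousAt_zpow₀ x _ (Or.inl (ne_of_gt (huIcc hx)))).continuousWithinAt
      exact hcs.intervalIntegrable
    have hIinv : IntervalIntegrable (fun x:ℝ => c M * x⁻¹) volume ε a := by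
      exact (continuousOn_const.mul
        (continuousOn_inv₀.mono (Set.subset_compl_singleton_iff.mpr h0uIcc))).intervalIntegrable
    rw [intervalIntegral.integral_add (hIsum.add hIinv) (hIg ε a),
      intervalIntegral.integral_add hIsum hIinv]
    congr 1
    congr 1
    · rw [intervalIntegral.integral_finset_sum (fun k _ => hIzpow (c k) _)]
      refine Finset.sum_congr rfl fun k hk => ?_
      have hkM : k < M := Finset.mem_range.mp hk
      rw [intervalIntegral.integral_const_mul, mul_div_assoc]
      congr 1
      have hne : (k:ℤ) - (M+1) ≠ -1 := by omega
      rw [integral_zpow (Or.inr ⟨hne, h0uIcc⟩)]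
      have e1 : (k:ℤ) - (M+1) + 1 = (k:ℤ) - M := by ring
      rw [e1]
      congr 1
      push_cast; ring
    · rw [intervalIntegral.integral_const_mul, integral_inv_of_pos hε0 ha,
        Real.log_div (ne_of_gt ha) (ne_of_gt hε0)]
  have hEeq : ∀ ε : ℝ, ε ∈ Set.Ioo 0 a →
      ((∫ x in ε..a, f x / x ^ (M+1)) -
        ((∑ k ∈ Finset.range (M + 1 - 1),
            c k / (((M + 1 - k - 1 : ℕ) : ℝ) * ε ^ (M + 1 - k - 1))) -
          c (M + 1 - 1) * Real.log ε))
      = (((∑ k ∈ Finset.range M, c k * a ^ ((k:ℤ) - M) / ((k:ℝ) - M))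
          + c M * Real.log a) + ∫ x in (0:ℝ)..a, g x) - ∫ x in (0:ℝ)..ε, g x := by
    intro ε hε
    have hadj : (∫ x in (0:ℝ)..ε, g x) + (∫ x in ε..a, g x) = ∫ x in (0:ℝ)..a, g x :=
      intervalIntegral.integral_add_adjacent_intervals (hIg 0 ε) (hIg ε a)
    rw [hint ε hε]
    simp only [Nat.add_sub_cancel]
    have hterm : ∀ k ∈ Finset.range M,
        c k * (a ^ ((k:ℤ) - M) - ε ^ ((k:ℤ) - M)) / ((k:ℝ) - M)
          - c k / (((M - k : ℕ) : ℝ) * ε ^ (M - k))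
        = c k * a ^ ((k:ℤ) - M) / ((k:ℝ) - M) := by
      intro k hk
      have hkM : k < M := Finset.mem_range.mp hk
      have h1 : ((M - k : ℕ) : ℝ) = (M:ℝ) - k := by
        push_cast [Nat.cast_sub hkM.le]; ring
      have h2 : ε ^ ((k:ℤ) - M) = (ε ^ (M - k))⁻¹ := by
        rw [show (k:ℤ) - M = -((M - k : ℕ) : ℤ) by omega, zpow_neg, zpow_natCast]
      have hεpow : ε ^ (M - k) ≠ 0 := pow_ne_zero _ (ne_of_gt hε.1)
      have hMk : (M:ℝ) - k ≠ 0 := by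
        have : (k:ℝ) < M := by exact_mod_cast hkM
        linarith
      have key : c k * (ε ^ (M-k))⁻¹ / ((k:ℝ) - M)
          = - (c k / (((M:ℝ) - k) * ε ^ (M-k))) := by
        rw [show (k:ℝ) - M = -((M:ℝ)-k) by ring, div_neg, ← div_eq_mul_inv, div_div,
          mul_comm (ε ^ (M-k))]
      rw [h1, h2, mul_sub, sub_div, key]
      ring
    have hsum2 : (∑ k ∈ Finset.range M,
          c k * (a ^ ((k:ℤ) - M) - ε ^ ((k:ℤ) - M)) / ((k:ℝ) - M))
        - (∑ k ∈ Finset.range M, c k / (((M - k : ℕ) : ℝ) * ε ^ (M - k)))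
        = ∑ k ∈ Finset.range M, c k * a ^ ((k:ℤ) - M) / ((k:ℝ) - M) := by
      rw [← Finset.sum_sub_distrib]
      exact Finset.sum_congr rfl hterm
    have hca : ∀ k, M + 1 - k - 1 = M - k := fun k => by omega
    simp only [hca]
    rw [← hadj]
    linarith [hsum2]
  have hmem : Set.Ioo (0:ℝ) a ∈ nhdsWithin (0:ℝ) (Set.Ioi 0) :=
    Ioo_mem_nhdsGT_of_mem ⟨le_refl 0, ha⟩
  have htend : Tendsto (fun ε : ℝ =>
      (((∑ k ∈ Finset.range M, c k * a ^ ((k:ℤ) - M) / ((k:ℝ) - M))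
          + c M * Real.log a) + ∫ x in (0:ℝ)..a, g x) - ∫ x in (0:ℝ)..ε, g x)
      (nhdsWithin 0 (Set.Ioi 0))
      (nhds (((∑ k ∈ Finset.range M, c k * a ^ ((k:ℤ) - M) / ((k:ℝ) - M))
          + c M * Real.log a) + ∫ x in (0:ℝ)..a, g x)) := by
    have hc0 : Tendsto (fun ε : ℝ => ∫ x in (0:ℝ)..ε, g x) (nhds 0) (nhds 0) := by
      have hcp : Continuous (fun ε : ℝ => ∫ x in (0:ℝ)..ε, g x) :=
        intervalIntegral.continuous_primitive (fun _ _ => hIg _ _) 0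
      simpa using hcp.tendsto 0
    simpa using (tendsto_const_nhds.sub (hc0.mono_left nhdsWithin_le_nhds))
  exact htend.congr' (by filter_upwards [hmem] with ε hε using (hEeq ε hε).symm)

lemma my_part2 (c : ℕ → ℝ) (M : ℕ) (a : ℝ) (ha : 0 < a) (F : ℂ → ℂ) (g : ℝ → ℝ)
    (hgcont : Continuous g)
    (hsumC : ∀ z : ℂ, HasSum (fun k => (c k : ℂ) * z ^ k) (F z))
    (habs : ∀ r : ℝ, 0 ≤ r → Summable (fun k => |c k| * r ^ k))
    (hgsum : ∀ x : ℝ, HasSum (fun j => c (M + 1 + j) * x ^ j) (g x)) :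
    ((((∑ k ∈ Finset.range M, c k * a ^ ((k:ℤ) - M) / ((k:ℝ) - M)) + c M * Real.log a)
        + ∫ x in (0:ℝ)..a, g x : ℝ) : ℂ)
      = (1 / (2 * (Real.pi : ℂ) * (a : ℂ) ^ M)) *
        ∫ θ in (0 : ℝ)..(2 * Real.pi),
          F ((a : ℂ) * Complex.exp ((θ : ℂ) * Complex.I)) *
            ((Real.log a : ℂ) + Complex.I * ((θ : ℂ) - (Real.pi : ℂ))) *
            Complex.exp ((1 - ((M + 1 : ℕ) : ℂ)) * (θ : ℂ) * Complex.I) := by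
  have ha0 : (a : ℂ) ≠ 0 := by exact_mod_cast ne_of_gt ha
  have hpi : (0:ℝ) < 2 * Real.pi := by positivity
  -- Step (a) : evaluate ∫_0^a g
  have hIg : (∫ x in (0:ℝ)..a, g x) = ∑' j : ℕ, c (M + 1 + j) * a ^ (j+1) / ((j:ℝ)+1) := by
    have hshift : Summable (fun j => |c (M + 1 + j)| * a ^ j) := by
      have h1 := ((_root_.summable_nat_add_iff (f := fun k => |c k| * a ^ k) (M+1)).mpr
        (habs a ha.le)).div_const (a^(M+1))
      refine h1.congr fun j => ?_
      rw [add_comm j (M+1), pow_add]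
      field_simp
    have hswap := my_integral_tsum (fun j x => c (M + 1 + j) * x ^ j) 0 a ha.le
      (fun j => (continuous_const.mul (continuous_pow j)))
      (fun j => |c (M + 1 + j)| * a ^ j) hshift
      (fun j => by positivity)
      (fun j x hx => by
        rw [Real.norm_eq_abs, abs_mul, _root_.abs_pow]
        exact mul_le_mul_of_nonneg_left (pow_le_pow_left₀ (abs_nonneg x)
          (by rw [_root_.abs_of_nonneg hx.1.le]; exact hx.2) j) (abs_nonneg _))
    have hcong : (∫ x in (0:ℝ)..a, g x) = ∫ x in (0:ℝ)..a, (∑' j, c (M + 1 + j) * x ^ j) :=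
      intervalIntegral.integral_congr fun x _ => ((hgsum x).tsum_eq).symm
    rw [hcong, hswap]
    refine tsum_congr fun j => ?_
    rw [intervalIntegral.integral_const_mul, integral_pow, zero_pow (Nat.succ_ne_zero j),
      sub_zero, mul_div_assoc]
  -- kernel functions
  set w : ℝ → ℂ := fun θ => ((Real.log a : ℂ) + Complex.I * ((θ:ℂ) - (Real.pi:ℂ))) with hw
  set K : ℕ → ℝ → ℂ := fun k θ => ((c k : ℂ) * (a:ℂ)^k) * w θ *
    Complex.exp ((((k:ℤ) - (M:ℤ) : ℤ) : ℂ) * (θ:ℂ) * Complex.I) with hK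
  -- Step (b) : the integrand is the sum of the K k
  have hptwise : ∀ θ : ℝ,
      F ((a : ℂ) * Complex.exp ((θ : ℂ) * Complex.I)) *
        ((Real.log a : ℂ) + Complex.I * ((θ : ℂ) - (Real.pi : ℂ))) *
        Complex.exp ((1 - ((M + 1 : ℕ) : ℂ)) * (θ : ℂ) * Complex.I)
      = ∑' k, K k θ := by
    intro θ
    have hs := ((hsumC ((a : ℂ) * Complex.exp ((θ : ℂ) * Complex.I))).mul_right
      (((Real.log a : ℂ) + Complex.I * ((θ:ℂ) - (Real.pi:ℂ))) *
        Complex.exp ((1 - ((M + 1 : ℕ) : ℂ)) * (θ:ℂ) * Complex.I)))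
    have e : (fun k => (c k : ℂ) * ((a : ℂ) * Complex.exp ((θ : ℂ) * Complex.I)) ^ k *
        (((Real.log a : ℂ) + Complex.I * ((θ:ℂ) - (Real.pi:ℂ))) *
          Complex.exp ((1 - ((M + 1 : ℕ) : ℂ)) * (θ:ℂ) * Complex.I)))
        = fun k => K k θ := by
      funext k
      rw [hK, hw]
      simp only [mul_pow, ← Complex.exp_nat_mul]
      have hexp : Complex.exp ((k:ℂ) * ((θ:ℂ) * Complex.I)) *
          Complex.exp ((1 - ((M+1:ℕ):ℂ)) * (θ:ℂ) * Complex.I)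
          = Complex.exp ((((k:ℤ) - (M:ℤ) : ℤ):ℂ) * (θ:ℂ) * Complex.I) := by
        rw [← Complex.exp_add]
        congr 1
        push_cast
        ring
      calc (c k : ℂ) * ((a:ℂ)^k * Complex.exp ((k:ℂ) * ((θ:ℂ) * Complex.I))) *
            (((Real.log a : ℂ) + Complex.I * ((θ:ℂ) - (Real.pi:ℂ))) *
              Complex.exp ((1 - ((M+1:ℕ):ℂ)) * (θ:ℂ) * Complex.I))
          = (c k : ℂ) * (a:ℂ)^k * ((Real.log a : ℂ) + Complex.I * ((θ:ℂ) - (Real.pi:ℂ))) *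
            (Complex.exp ((k:ℂ) * ((θ:ℂ) * Complex.I)) *
              Complex.exp ((1 - ((M+1:ℕ):ℂ)) * (θ:ℂ) * Complex.I)) := by ring
        _ = (c k : ℂ) * (a:ℂ)^k * ((Real.log a : ℂ) + Complex.I * ((θ:ℂ) - (Real.pi:ℂ))) *
            Complex.exp ((((k:ℤ) - (M:ℤ) : ℤ):ℂ) * (θ:ℂ) * Complex.I) := by rw [hexp]
    rw [e] at hs
    rw [mul_assoc]
    exact hs.tsum_eq.symm
  -- continuity of K k
  have hKcont : ∀ k, Continuous (K k) := by
    intro k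
    rw [hK, hw]
    apply Continuous.mul
    · apply Continuous.mul continuous_const
      exact continuous_const.add (continuous_const.mul
        (Complex.continuous_ofReal.sub continuous_const))
    · exact Complex.continuous_exp.comp
        ((continuous_const.mul Complex.continuous_ofReal).mul continuous_const)
  -- bound
  set B : ℕ → ℝ := fun k => |c k| * a ^ k * (|Real.log a| + Real.pi) with hB
  have hBsum : Summable B := (habs a ha.le).mul_right _
  have hBnn : ∀ k, 0 ≤ B k := fun k => by
    rw [hB]
    have := Real.pi_pos
    positivity
  have hbound : ∀ k, ∀ θ ∈ Set.Ioc (0:ℝ) (2*Real.pi), ‖K k θ‖ ≤ B k := by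
    intro k θ hθ
    rw [hK, hw, hB]
    have hexp1 : ‖Complex.exp ((((k:ℤ) - (M:ℤ) : ℤ) : ℂ) * (θ:ℂ) * Complex.I)‖ = 1 := by
      have e1 : ((((k:ℤ) - (M:ℤ) : ℤ) : ℂ) * (θ:ℂ) * Complex.I)
          = (((((k:ℤ) - (M:ℤ) : ℤ) : ℝ) * θ : ℝ) : ℂ) * Complex.I := by push_cast; ring
      rw [e1]
      exact Complex.norm_exp_ofReal_mul_I _
    rw [norm_mul, hexp1, mul_one, norm_mul]
    have h1 : ‖((c k : ℝ) : ℂ) * (a:ℂ)^k‖ = |c k| * a ^ k := by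
      rw [norm_mul, norm_pow, Complex.norm_real, Complex.norm_real, Real.norm_eq_abs,
        Real.norm_eq_abs, _root_.abs_of_nonneg ha.le]
    rw [h1]
    have h2 : ‖(Real.log a : ℂ) + Complex.I * ((θ:ℂ) - (Real.pi:ℂ))‖
        ≤ |Real.log a| + Real.pi := by
      refine (norm_add_le _ _).trans ?_
      rw [Complex.norm_real, Real.norm_eq_abs, norm_mul, Complex.norm_I, one_mul]
      have e2 : ((θ:ℂ) - (Real.pi:ℂ)) = (((θ - Real.pi : ℝ)) : ℂ) := by push_cast; ring
      rw [e2, Complex.norm_real, Real.norm_eq_abs]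
      have : |θ - Real.pi| ≤ Real.pi := by
        rw [abs_le]
        constructor <;> [linarith [hθ.1]; linarith [hθ.2]]
      linarith
    have h3 : (0:ℝ) ≤ |c k| * a ^ k := by positivity
    exact mul_le_mul_of_nonneg_left h2 h3
  -- swap sum and integral
  have hswapK := my_integral_tsum K 0 (2*Real.pi) hpi.le hKcont B hBsum hBnn hbound
  have hIntEq : (∫ θ in (0:ℝ)..(2*Real.pi),
      F ((a : ℂ) * Complex.exp ((θ : ℂ) * Complex.I)) *
        ((Real.log a : ℂ) + Complex.I * ((θ : ℂ) - (Real.pi : ℂ))) *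
        Complex.exp ((1 - ((M + 1 : ℕ) : ℂ)) * (θ : ℂ) * Complex.I))
      = ∑' k, ∫ θ in (0:ℝ)..(2*Real.pi), K k θ := by
    rw [← hswapK]
    exact intervalIntegral.integral_congr fun θ _ => hptwise θ
  -- evaluate each mode
  have hv : ∀ k : ℕ, (∫ θ in (0:ℝ)..(2*Real.pi), K k θ)
      = if k = M then (c M : ℂ) * (a:ℂ)^M * (2*Real.pi) * (Real.log a : ℂ)
        else (c k : ℂ) * (a:ℂ)^k * (2*Real.pi) / (((k:ℤ) - (M:ℤ) : ℤ) : ℂ) := by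
    intro k
    by_cases hkM : k = M
    · subst hkM
      rw [if_pos rfl]
      have e0 : ∀ θ : ℝ, K k θ = (c k : ℂ) * (a:ℂ)^k * w θ := by
        intro θ
        rw [hK]
        simp
      rw [intervalIntegral.integral_congr (fun θ _ => e0 θ)]
      rw [intervalIntegral.integral_const_mul, hw]
      have hIw : (∫ θ in (0:ℝ)..(2*Real.pi),
          ((Real.log a : ℂ) + Complex.I * ((θ:ℂ) - (Real.pi:ℂ))))
          = (2*Real.pi) * (Real.log a : ℂ) := by
        rw [intervalIntegral.integral_add]
        · rw [intervalIntegral.integral_const]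
          have hI2 : (∫ θ in (0:ℝ)..(2*Real.pi), Complex.I * ((θ:ℂ) - (Real.pi:ℂ))) = 0 := by
            rw [intervalIntegral.integral_const_mul]
            have e2 : ∀ θ:ℝ, ((θ:ℂ) - (Real.pi:ℂ)) = (((θ - Real.pi : ℝ)) : ℂ) := by
              intro θ; push_cast; ring
            rw [intervalIntegral.integral_congr (fun θ _ => e2 θ),
              intervalIntegral.integral_ofReal]
            have : (∫ θ in (0:ℝ)..(2*Real.pi), (θ - Real.pi)) = 0 := by
              rw [intervalIntegral.integral_sub intervalIntegral.intervalIntegrable_id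
                intervalIntegrable_const, integral_id, intervalIntegral.integral_const]
              simp only [smul_eq_mul]
              ring
            rw [this]
            simp
          rw [hI2, add_zero, sub_zero, Complex.real_smul]
          push_cast
          ring
        · exact intervalIntegrable_const
        · exact (continuous_const.mul
            (Complex.continuous_ofReal.sub continuous_const)).intervalIntegrable _ _
      rw [hIw]
      ring
    · rw [if_neg hkM]
      set n : ℤ := (k:ℤ) - (M:ℤ) with hn
      have hn0 : n ≠ 0 := by omega
      have e0 : ∀ θ : ℝ, K k θ = ((c k : ℂ) * (a:ℂ)^k) *
          ((Real.log a : ℂ) * Complex.exp ((n:ℂ) * (θ:ℂ) * Complex.I)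
            + Complex.I * (((θ:ℂ) - (Real.pi:ℂ)) * Complex.exp ((n:ℂ) * (θ:ℂ) * Complex.I))) := by
        intro θ
        rw [hK, hw]
        ring
      rw [intervalIntegral.integral_congr (fun θ _ => e0 θ),
        intervalIntegral.integral_const_mul]
      have hIexp : Continuous (fun θ:ℝ => Complex.exp ((n:ℂ) * (θ:ℂ) * Complex.I)) :=
        Complex.continuous_exp.comp
          ((continuous_const.mul Complex.continuous_ofReal).mul continuous_const)
      rw [intervalIntegral.integral_add
          (f := fun θ => (Real.log a : ℂ) * Complex.exp ((n:ℂ) * (θ:ℂ) * Complex.I))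
          (g := fun θ => Complex.I * (((θ:ℂ) - (Real.pi:ℂ)) * Complex.exp ((n:ℂ) * (θ:ℂ) * Complex.I)))
          ((continuous_const.mul hIexp).intervalIntegrable _ _)
          ((continuous_const.mul ((Complex.continuous_ofReal.sub continuous_const).mul
            hIexp)).intervalIntegrable _ _),
        intervalIntegral.integral_const_mul, intervalIntegral.integral_const_mul,
        my_circle_int n hn0, my_circle_int2 n hn0, mul_zero, zero_add]
      have hsimp : Complex.I * (2 * (Real.pi:ℂ) / ((n:ℂ) * Complex.I))
          = 2 * (Real.pi:ℂ) / (n:ℂ) := by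
        have hnC : (n:ℂ) ≠ 0 := by exact_mod_cast hn0
        field_simp
      rw [hsimp]
      ring
  -- summability of mode integrals
  have hVsum : Summable (fun k => ∫ θ in (0:ℝ)..(2*Real.pi), K k θ) := by
    refine Summable.of_norm_bounded (hBsum.mul_right (2*Real.pi)) fun k => ?_
    have h1 := intervalIntegral.norm_integral_le_of_norm_le_const (C := B k)
      (f := K k) (a := 0) (b := 2*Real.pi) (fun θ hθ => by
        refine hbound k θ ?_
        rwa [Set.uIoc_of_le hpi.le] at hθ)
    calc ‖∫ θ in (0:ℝ)..(2*Real.pi), K k θ‖ ≤ B k * |2*Real.pi - 0| := h1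
      _ = B k * (2*Real.pi) := by rw [sub_zero, _root_.abs_of_nonneg hpi.le]
  have hsplitV : (∑' k, ∫ θ in (0:ℝ)..(2*Real.pi), K k θ)
      = (∑ k ∈ Finset.range M, ∫ θ in (0:ℝ)..(2*Real.pi), K k θ)
        + (∫ θ in (0:ℝ)..(2*Real.pi), K M θ)
        + ∑' j, ∫ θ in (0:ℝ)..(2*Real.pi), K (j + (M+1)) θ := by
    rw [← Summable.sum_add_tsum_nat_add (M+1) hVsum, Finset.sum_range_succ]
  -- final assembly
  rw [hIg, hIntEq, hsplitV]
  rw [Complex.ofReal_add, Complex.ofReal_add, Complex.ofReal_tsum, Complex.ofReal_sum]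
  have hX : (2 * (Real.pi : ℂ) * (a:ℂ)^M) ≠ 0 := by
    have : (Real.pi : ℂ) ≠ 0 := by exact_mod_cast Real.pi_ne_zero
    exact mul_ne_zero (mul_ne_zero two_ne_zero this) (pow_ne_zero _ ha0)
  rw [div_mul_eq_mul_div, one_mul, eq_div_iff hX]
  rw [add_mul, add_mul, Finset.sum_mul, ← tsum_mul_right]
  congr 1
  congr 1
  · refine Finset.sum_congr rfl fun k hk => ?_
    have hkM : k < M := Finset.mem_range.mp hk
    rw [hv k, if_neg (Nat.ne_of_lt hkM)]
    have hz : (a:ℂ)^((k:ℤ)-(M:ℤ)) = (a:ℂ)^k / (a:ℂ)^M := by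
      rw [zpow_sub₀ ha0, zpow_natCast, zpow_natCast]
    have hne : ((k:ℂ) - (M:ℂ)) ≠ 0 := by
      intro h
      have : (k:ℂ) = (M:ℂ) := by linear_combination h
      exact Nat.ne_of_lt hkM (by exact_mod_cast this)
    push_cast [hz]
    field_simp
  · rw [hv M, if_pos rfl]
    push_cast
    ring
  · refine tsum_congr fun j => ?_
    rw [hv (j + (M+1)), if_neg (by omega)]
    have hcast : (((j + (M+1) : ℕ) : ℤ) - (M:ℤ) : ℤ) = ((j:ℤ)+1) := by omega
    rw [hcast]
    have hpow : (a:ℂ)^(j + (M+1)) = (a:ℂ)^(j+1) * (a:ℂ)^M := by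
      rw [← pow_add]; ring_nf
    rw [show M + 1 + j = j + (M+1) by omega]
    push_cast [hpow]
    have hne : ((j:ℂ)+1) ≠ 0 := by
      exact_mod_cast Nat.cast_add_one_ne_zero (R := ℂ) j
    field_simp

/-- Contour integral representation of the finite part integral `⨍_0^a f(x)/x^m dx`
for an entire `F` that is real on the real axis: the regularized limit exists and,
viewed as a complex number, equals
`(1/(2π a^{m-1})) ∫_0^{2π} F(a e^{iθ})(ln a + i(θ−π)) e^{i(1−m)θ} dθ`. -/
theorem stmt_6 (F : ℂ → ℂ) (hF : Differentiable ℂ F)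
    (hreal : ∀ x : ℝ, (F x).im = 0)
    (f : ℝ → ℝ) (hf : ∀ x : ℝ, f x = (F x).re)
    (c : ℕ → ℝ) (hc : ∀ k, (c k : ℂ) = iteratedDeriv k F 0 / (Nat.factorial k))
    (m : ℕ) (hm : 1 ≤ m) (a : ℝ) (ha : 0 < a) :
    ∃ L : ℝ,
      Tendsto
        (fun ε : ℝ =>
          (∫ x in ε..a, f x / x ^ m) -
            ((∑ k ∈ Finset.range (m - 1),
                c k / (((m - k - 1 : ℕ) : ℝ) * ε ^ (m - k - 1))) -
              c (m - 1) * Real.log ε))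
        (nhdsWithin 0 (Set.Ioi 0)) (nhds L) ∧
      (L : ℂ) = (1 / (2 * (Real.pi : ℂ) * (a : ℂ) ^ (m - 1))) *
        ∫ θ in (0 : ℝ)..(2 * Real.pi),
          F ((a : ℂ) * Complex.exp ((θ : ℂ) * Complex.I)) *
            ((Real.log a : ℂ) + Complex.I * ((θ : ℂ) - (Real.pi : ℂ))) *
            Complex.exp ((1 - (m : ℂ)) * (θ : ℂ) * Complex.I) := by
  obtain ⟨M, rfl⟩ : ∃ M, m = M + 1 := ⟨m - 1, by omega⟩

  have hsumC : ∀ z : ℂ, HasSum (fun k => (c k : ℂ) * z ^ k) (F z) := by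
    intro z
    have H := Complex.hasSum_taylorSeries_of_entire hF 0 z
    simp only [sub_zero, smul_eq_mul] at H
    have e : (fun k : ℕ => (c k : ℂ) * z ^ k)
        = fun k : ℕ => (Nat.factorial k : ℂ)⁻¹ * (z ^ k * iteratedDeriv k F 0) := by
      funext k
      rw [hc k]
      have : (Nat.factorial k : ℂ) ≠ 0 := by exact_mod_cast (Nat.factorial_ne_zero k)
      field_simp
    rw [e]; exact H
  have habs : ∀ r : ℝ, 0 ≤ r → Summable (fun k => |c k| * r ^ k) := by
    intro r hr
    have h1 : Summable (fun k => ‖(c k : ℂ) * (r : ℂ) ^ k‖) :=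
      summable_norm_iff.mpr (hsumC (r : ℂ)).summable
    have e : (fun k => ‖(c k : ℂ) * (r : ℂ) ^ k‖) = fun k => |c k| * r ^ k := by
      funext k
      rw [norm_mul, norm_pow, Complex.norm_real, Complex.norm_real,
        Real.norm_eq_abs, Real.norm_eq_abs, _root_.abs_of_nonneg hr]
    rwa [e] at h1
  have hsumR : ∀ x : ℝ, HasSum (fun k => c k * x ^ k) (f x) := by
    intro x
    have H := (Complex.reCLM : ℂ →L[ℝ] ℝ).hasSum (hsumC (x : ℂ))
    have e : (fun k : ℕ => Complex.reCLM ((c k : ℂ) * (x:ℂ) ^ k)) = fun k => c k * x ^ k := by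
      funext k
      have : ((c k : ℂ) * (x:ℂ) ^ k) = ((c k * x ^ k : ℝ) : ℂ) := by push_cast; ring
      rw [this, Complex.reCLM_apply, Complex.ofReal_re]
    rw [e] at H
    rwa [hf x, ← Complex.reCLM_apply]
  -- shifted power series
  set d : ℕ → ℝ := fun j => c (M + 1 + j) with hd
  set p := FormalMultilinearSeries.ofScalars ℝ d with hp
  have hprad : p.radius = ⊤ := by
    apply FormalMultilinearSeries.radius_eq_top_of_summable_norm
    intro r'
    have h0 := habs ((r' : ℝ) + 1) (by positivity)
    have h1 : Summable (fun n => |c (n + (M+1))| * ((r':ℝ)+1) ^ (n + (M+1))) :=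
      (_root_.summable_nat_add_iff (f := fun k => |c k| * ((r':ℝ)+1) ^ k) (M+1)).mpr h0
    refine Summable.of_nonneg_of_le (fun n => by positivity) (fun n => ?_)
      (h1.div_const (((r':ℝ)+1) ^ (M+1)))
    have hpn : ‖p n‖ = |c (M + 1 + n)| := by
      rw [hp, FormalMultilinearSeries.ofScalars_norm, hd, Real.norm_eq_abs]
    rw [hpn, le_div_iff₀ (by positivity)]
    have h2 : (r' : ℝ) ^ n ≤ ((r':ℝ)+1) ^ n := pow_le_pow_left₀ r'.coe_nonneg (by linarith) n
    calc |c (M+1+n)| * (r':ℝ)^n * ((r':ℝ)+1)^(M+1)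
        ≤ |c (M+1+n)| * ((r':ℝ)+1)^n * ((r':ℝ)+1)^(M+1) := by
          have := mul_le_mul_of_nonneg_left h2 (abs_nonneg (c (M+1+n)))
          nlinarith [pow_pos (show (0:ℝ) < (r':ℝ)+1 by positivity) (M+1)]
      _ = |c (n+(M+1))| * ((r':ℝ)+1)^(n+(M+1)) := by
          rw [pow_add, add_comm n (M+1)]; ring
  have hgcont : Continuous p.sum := by
    rw [← continuousOn_univ, ← Metric.emetric_ball_top (0:ℝ), ← hprad]
    exact p.continuousOn
  have hgsum : ∀ x : ℝ, HasSum (fun j => c (M + 1 + j) * x ^ j) (p.sum x) := by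
    intro x
    have H := p.hasSum (x := x) (by rw [hprad]; exact Metric.emetric_ball_top (0:ℝ) ▸ Set.mem_univ x)
    have e : (fun n => p n fun _ => x) = fun n => c (M + 1 + n) * x ^ n := by
      funext n
      rw [hp, FormalMultilinearSeries.ofScalars_apply_eq, smul_eq_mul]
    rwa [e] at H
  refine ⟨(((∑ k ∈ Finset.range M, c k * a ^ ((k:ℤ) - M) / ((k:ℝ) - M)) + c M * Real.log a)
      + ∫ x in (0:ℝ)..a, p.sum x), ?_, ?_⟩
  · exact my_part1 f c M a ha p.sum hgcont hsumR hgsum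
  · have h := my_part2 c M a ha F p.sum hgcont hsumC habs hgsum
    simpa only [Nat.add_sub_cancel] using h
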